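/- For every w ∈ ℂ, every τ in the upper half-plane, every positive integer d and every integer k, one has ∑_{ℓ=0}^{d−1} e^{−2iπkℓ/d} θ(w + ℓ/d, τ) = d · e^{iπ k² τ} · e^{2iπ k w} · θ(dw + dkτ, d²τ). -/

import Mathlib

open Finset

/-- The Jacobi theta function `θ(z, τ) = ∑_{m ∈ ℤ} exp(iπm²τ) exp(2iπmz)`. -/
noncomputable def theta (z τ : ℂ) : ℂ :=
  ∑' m : ℤ, Complex.exp ((Real.pi : ℂ) * Complex.I * (m : ℂ) ^ 2 * τ) *
    Complex.exp (2 * (Real.pi : ℂ) * Complex.I * (m : ℂ) * z)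

lemma theta_eq (z τ : ℂ) : theta z τ = jacobiTheta₂ z τ := by
  unfold theta jacobiTheta₂ jacobiTheta₂_term
  congr 1; ext m; rw [← Complex.exp_add]; ring_nf

/-- Lemma 2.5: the finite Fourier transform of the theta function:
`∑_{ℓ=0}^{d−1} e^{−2iπkℓ/d} θ(w + ℓ/d, τ) = d e^{iπk²τ} e^{2iπkw} θ(dw + dkτ, d²τ)`. -/
theorem fourier_sum_theta (w τ : ℂ) (hτ : 0 < τ.im) (d : ℕ) (hd : 0 < d) (k : ℤ) :
    ∑ l ∈ Finset.range d,
      Complex.exp (-2 * (Real.pi : ℂ) * Complex.I * (k : ℂ) * (l : ℂ) / d) *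
        theta (w + (l : ℂ) / d) τ =
      (d : ℂ) * Complex.exp ((Real.pi : ℂ) * Complex.I * (k : ℂ) ^ 2 * τ) *
        Complex.exp (2 * (Real.pi : ℂ) * Complex.I * (k : ℂ) * w) *
        theta ((d : ℂ) * w + (d : ℂ) * (k : ℂ) * τ) ((d : ℂ) ^ 2 * τ) := by
  have hd0 : (d : ℂ) ≠ 0 := Nat.cast_ne_zero.mpr hd.ne'
  simp only [theta_eq]
  set g : ℤ → ℂ := fun m => if (d : ℤ) ∣ (m - k) then (d : ℂ) * jacobiTheta₂_term m w τ else 0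
    with hg
  -- Step 1: the LHS is the sum of g
  have h1' : HasSum (fun m : ℤ => ∑ l ∈ Finset.range d,
      Complex.exp (-2 * (Real.pi : ℂ) * Complex.I * (k : ℂ) * (l : ℂ) / d) *
        jacobiTheta₂_term m (w + (l : ℂ) / d) τ)
      (∑ l ∈ Finset.range d,
        Complex.exp (-2 * (Real.pi : ℂ) * Complex.I * (k : ℂ) * (l : ℂ) / d) *
          jacobiTheta₂ (w + (l : ℂ) / d) τ) :=
    hasSum_sum fun l _ => (hasSum_jacobiTheta₂_term _ hτ).mul_left _
  have key : (fun m : ℤ => ∑ l ∈ Finset.range d,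
      Complex.exp (-2 * (Real.pi : ℂ) * Complex.I * (k : ℂ) * (l : ℂ) / d) *
        jacobiTheta₂_term m (w + (l : ℂ) / d) τ) = g := by
    funext m
    set x : ℂ := Complex.exp (2 * (Real.pi : ℂ) * Complex.I * ((m : ℂ) - k) / d) with hx
    have hxd : x ^ d = 1 := by
      rw [hx, ← Complex.exp_nat_mul]
      have : (d : ℂ) * (2 * (Real.pi : ℂ) * Complex.I * ((m : ℂ) - k) / d)
          = ((m - k : ℤ) : ℂ) * (2 * (Real.pi : ℂ) * Complex.I) := by
        push_cast; field_simp
      rw [this, Complex.exp_int_mul_two_pi_mul_I]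
    have hterm : ∀ l ∈ Finset.range d,
        Complex.exp (-2 * (Real.pi : ℂ) * Complex.I * (k : ℂ) * (l : ℂ) / d) *
          jacobiTheta₂_term m (w + (l : ℂ) / d) τ
        = jacobiTheta₂_term m w τ * x ^ l := by
      intro l _
      rw [hx, ← Complex.exp_nat_mul, jacobiTheta₂_term, jacobiTheta₂_term,
        ← Complex.exp_add, ← Complex.exp_add]
      congr 1
      field_simp
      ring
    rw [Finset.sum_congr rfl hterm, ← Finset.mul_sum, hg]
    by_cases hdvd : (d : ℤ) ∣ (m - k)
    · obtain ⟨c, hc⟩ := hdvd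
      have hx1 : x = 1 := by
        rw [hx]
        have : 2 * (Real.pi : ℂ) * Complex.I * ((m : ℂ) - k) / d
            = (c : ℂ) * (2 * (Real.pi : ℂ) * Complex.I) := by
          have hmk : ((m : ℂ) - k) = (d : ℂ) * c := by exact_mod_cast congrArg (Int.cast : ℤ → ℂ) hc
          rw [hmk]; field_simp
        rw [this, Complex.exp_int_mul_two_pi_mul_I]
      simp only [hx1, one_pow, Finset.sum_const, Finset.card_range, nsmul_eq_mul, mul_one]
      rw [if_pos ⟨c, hc⟩, mul_comm]
    · have hx1 : x ≠ 1 := by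
        intro h
        rw [hx, Complex.exp_eq_one_iff] at h
        obtain ⟨n, hn⟩ := h
        apply hdvd
        refine ⟨n, ?_⟩
        have h2πI : (2 * (Real.pi : ℂ) * Complex.I) ≠ 0 := by
          simp [Real.pi_ne_zero, Complex.I_ne_zero]
        have h2 : (2 * (Real.pi : ℂ) * Complex.I) * ((m : ℂ) - k)
            = (2 * (Real.pi : ℂ) * Complex.I) * ((d : ℂ) * n) := by
          field_simp at hn
          linear_combination (2 * (Real.pi : ℂ) * Complex.I) * hn
        have h3 := mul_left_cancel₀ h2πI h2
        exact_mod_cast h3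
      rw [geom_sum_eq hx1, hxd]
      simp [hdvd]
  rw [key] at h1'
  -- Step 2: the RHS is the sum of g
  have him : 0 < ((d : ℂ) ^ 2 * τ).im := by
    have : ((d : ℂ) ^ 2 * τ).im = (d : ℝ) ^ 2 * τ.im := by
      simp [Complex.mul_im, pow_two, Complex.mul_re]
      try ring
    rw [this]
    positivity
  have hsum : HasSum (fun n : ℤ =>
      (d : ℂ) * Complex.exp ((Real.pi : ℂ) * Complex.I * (k : ℂ) ^ 2 * τ) *
        Complex.exp (2 * (Real.pi : ℂ) * Complex.I * (k : ℂ) * w) *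
        jacobiTheta₂_term n ((d : ℂ) * w + (d : ℂ) * (k : ℂ) * τ) ((d : ℂ) ^ 2 * τ))
      ((d : ℂ) * Complex.exp ((Real.pi : ℂ) * Complex.I * (k : ℂ) ^ 2 * τ) *
        Complex.exp (2 * (Real.pi : ℂ) * Complex.I * (k : ℂ) * w) *
        jacobiTheta₂ ((d : ℂ) * w + (d : ℂ) * (k : ℂ) * τ) ((d : ℂ) ^ 2 * τ)) :=
    (hasSum_jacobiTheta₂_term _ him).mul_left _
  have hi : Function.Injective (fun n : ℤ => k + (d : ℤ) * n) := by
    intro a b h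
    simp only at h
    have hdz : (d : ℤ) ≠ 0 := by exact_mod_cast hd.ne'
    exact mul_left_cancel₀ hdz (by linarith)
  have hcomp : ∀ n : ℤ, g (k + (d : ℤ) * n) =
      (d : ℂ) * Complex.exp ((Real.pi : ℂ) * Complex.I * (k : ℂ) ^ 2 * τ) *
        Complex.exp (2 * (Real.pi : ℂ) * Complex.I * (k : ℂ) * w) *
        jacobiTheta₂_term n ((d : ℂ) * w + (d : ℂ) * (k : ℂ) * τ) ((d : ℂ) ^ 2 * τ) := by
    intro n
    have hdvd : (d : ℤ) ∣ (k + (d : ℤ) * n - k) := ⟨n, by ring⟩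
    rw [hg]
    simp only [hdvd, if_pos]
    have comb : ∀ a b c : ℂ, (d : ℂ) * Complex.exp a * Complex.exp b * Complex.exp c
        = (d : ℂ) * Complex.exp (a + b + c) := by
      intro a b c
      rw [mul_assoc, mul_assoc, ← Complex.exp_add, ← Complex.exp_add, add_assoc]
    rw [jacobiTheta₂_term, jacobiTheta₂_term, comb]
    congr 2
    push_cast
    ring
  have h2 : HasSum g
      ((d : ℂ) * Complex.exp ((Real.pi : ℂ) * Complex.I * (k : ℂ) ^ 2 * τ) *
        Complex.exp (2 * (Real.pi : ℂ) * Complex.I * (k : ℂ) * w) *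
        jacobiTheta₂ ((d : ℂ) * w + (d : ℂ) * (k : ℂ) * τ) ((d : ℂ) ^ 2 * τ)) := by
    apply (Function.Injective.hasSum_iff hi ?_).mp
    · show HasSum (fun n : ℤ => g (k + (d : ℤ) * n)) _
      rw [funext hcomp]
      exact hsum
    · intro m hm
      simp only [hg]
      rw [if_neg]
      rintro ⟨c, hc⟩
      exact hm ⟨c, show k + (d : ℤ) * c = m by omega⟩
  exact h1'.unique h2
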